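/- arXiv:1505.00821 — 2 statements merged into one kernel-verified Lean document; each statement's English description precedes it below -/
import Mathlib

section
/- Let A2 and B2 be p×r real matrices with orthonormal columns. Then (1/r) tr(A2'(I_p - B2 B2')A2) ≤ ||A2'(A2 A2' - B2 B2')A2||_2 ≤ 2 ||B2 - A2||_2^2, where ||·||_2 denotes the spectral norm. In particular D(B2,A2) ≤ √2 ||B2 - A2||_2. -/
open Matrix

/-- The operator (spectral) norm of a real matrix, i.e. the norm of the induced
linear map between Euclidean spaces. -/
noncomputable def specNorm {m n : ℕ} (M : Matrix (Fin m) (Fin n) ℝ) : ℝ :=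
  ‖LinearMap.toContinuousLinearMap (Matrix.toEuclideanLin M)‖

section Helpers

open scoped Matrix.Norms.L2Operator

lemma real_conjTranspose_eq {m n : ℕ} (M : Matrix (Fin m) (Fin n) ℝ) : Mᴴ = Mᵀ := by
  ext i j; simp [conjTranspose_apply]

lemma specNorm_eq_l2 {m n : ℕ} (M : Matrix (Fin m) (Fin n) ℝ) : specNorm M = ‖M‖ := rfl

lemma norm_transpose_mul_self {m n : ℕ} (M : Matrix (Fin m) (Fin n) ℝ) :
    ‖Mᵀ * M‖ = ‖M‖ * ‖M‖ := by
  rw [← real_conjTranspose_eq]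
  exact Matrix.l2_opNorm_conjTranspose_mul_self M

lemma proj_norm_le_one {n : ℕ} (Q : Matrix (Fin n) (Fin n) ℝ)
    (hsym : Qᵀ = Q) (hidem : Q * Q = Q) : ‖Q‖ ≤ 1 := by
  have h1 : ‖Q‖ * ‖Q‖ = ‖Q‖ := by
    rw [← norm_transpose_mul_self, hsym, hidem]
  nlinarith [norm_nonneg Q]

lemma diag_le_norm {n : ℕ} (M : Matrix (Fin n) (Fin n) ℝ) (i : Fin n) : M i i ≤ ‖M‖ := by
  set x : EuclideanSpace ℝ (Fin n) := EuclideanSpace.single i 1 with hx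
  have hmv := M.l2_opNorm_mulVec x
  have hxnorm : ‖x‖ = 1 := by simp [hx]
  set y : EuclideanSpace ℝ (Fin n) := (EuclideanSpace.equiv (Fin n) ℝ).symm (M *ᵥ x) with hy
  have hyi : y i = M i i := by
    show (M *ᵥ (Pi.single i 1)) i = M i i
    simp [Matrix.mulVec_single]
  have hcoord : y i ≤ ‖y‖ := by
    have h2 : ‖y‖ = Real.sqrt (∑ j, ‖y j‖ ^ 2) := EuclideanSpace.norm_eq y
    have h3 : (y i) ^ 2 ≤ ∑ j, ‖y j‖ ^ 2 := by
      have := Finset.single_le_sum (f := fun j => ‖y j‖ ^ 2)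
        (fun j _ => by positivity) (Finset.mem_univ i)
      calc (y i) ^ 2 = ‖y i‖ ^ 2 := by rw [Real.norm_eq_abs, sq_abs]
        _ ≤ _ := this
    calc y i ≤ |y i| := le_abs_self _
      _ = Real.sqrt ((y i) ^ 2) := (Real.sqrt_sq_eq_abs _).symm
      _ ≤ Real.sqrt (∑ j, ‖y j‖ ^ 2) := Real.sqrt_le_sqrt h3
      _ = ‖y‖ := h2.symm
  calc M i i = y i := hyi.symm
    _ ≤ ‖y‖ := hcoord
    _ ≤ ‖M‖ * ‖x‖ := hmv
    _ = ‖M‖ := by rw [hxnorm, mul_one]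

lemma trace_le_card_norm {n : ℕ} (M : Matrix (Fin n) (Fin n) ℝ) :
    Matrix.trace M ≤ (n : ℝ) * ‖M‖ := by
  rw [Matrix.trace]
  calc (∑ i, M.diag i) ≤ ∑ _i : Fin n, ‖M‖ :=
        Finset.sum_le_sum (fun i _ => diag_le_norm M i)
    _ = (n : ℝ) * ‖M‖ := by simp

end Helpers

theorem stmt3 {p r : ℕ} (hr : 1 ≤ r) (hpr : r ≤ p)
    (A2 B2 : Matrix (Fin p) (Fin r) ℝ)
    (hA : A2ᵀ * A2 = 1) (hB : B2ᵀ * B2 = 1) :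
    (1 / (r : ℝ)) * Matrix.trace (A2ᵀ * (1 - B2 * B2ᵀ) * A2) ≤
      specNorm (A2ᵀ * (A2 * A2ᵀ - B2 * B2ᵀ) * A2) ∧
    specNorm (A2ᵀ * (A2 * A2ᵀ - B2 * B2ᵀ) * A2) ≤ 2 * (specNorm (B2 - A2)) ^ 2 ∧
    Real.sqrt (1 - (1 / (r : ℝ)) * Matrix.trace (B2 * B2ᵀ * A2 * A2ᵀ)) ≤
      Real.sqrt 2 * specNorm (B2 - A2) := by
  open scoped Matrix.Norms.L2Operator in
  have hA' : ∀ {k : ℕ} (X : Matrix (Fin r) (Fin k) ℝ), A2ᵀ * (A2 * X) = X := by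
    intro k X; rw [← Matrix.mul_assoc, hA, Matrix.one_mul]
  have hB' : ∀ {k : ℕ} (X : Matrix (Fin r) (Fin k) ℝ), B2ᵀ * (B2 * X) = X := by
    intro k X; rw [← Matrix.mul_assoc, hB, Matrix.one_mul]
  set P : Matrix (Fin p) (Fin p) ℝ := B2 * B2ᵀ with hP
  set Q : Matrix (Fin p) (Fin p) ℝ := 1 - P with hQdef
  set N : Matrix (Fin p) (Fin r) ℝ := Q * A2 with hN
  have hrpos : (0 : ℝ) < r := by exact_mod_cast hr
  have hrne : (r : ℝ) ≠ 0 := ne_of_gt hrpos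
  -- key matrix identities
  have hQsym : Qᵀ = Q := by
    rw [hQdef, hP, transpose_sub, transpose_one, transpose_mul, transpose_transpose]
  have hQidem : Q * Q = Q := by
    rw [hQdef]
    simp only [Matrix.mul_sub, Matrix.sub_mul, Matrix.mul_one, Matrix.one_mul, hP,
      Matrix.mul_assoc, hB']
    abel
  have key1 : A2ᵀ * (A2 * A2ᵀ - B2 * B2ᵀ) * A2 = Nᵀ * N := by
    rw [hN, transpose_mul, hQsym, hQdef, hP]
    simp only [Matrix.mul_sub, Matrix.sub_mul, Matrix.mul_one, Matrix.one_mul,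
      Matrix.mul_assoc, hA', hB', hA]
    abel
  have keyT : A2ᵀ * (1 - B2 * B2ᵀ) * A2 = A2ᵀ * (A2 * A2ᵀ - B2 * B2ᵀ) * A2 := by
    simp only [Matrix.mul_sub, Matrix.sub_mul, Matrix.mul_one, Matrix.one_mul,
      Matrix.mul_assoc, hA', hA]
  have key2 : N = Q * (A2 - B2) := by
    rw [hN, hQdef, hP]
    simp only [Matrix.mul_sub, Matrix.sub_mul, Matrix.mul_one, Matrix.one_mul,
      Matrix.mul_assoc, hB', hB]
    abel
  -- norm facts
  have hQnorm : ‖Q‖ ≤ 1 := proj_norm_le_one Q hQsym hQidem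
  have hNnorm : ‖N‖ ≤ ‖B2 - A2‖ := by
    calc ‖N‖ = ‖Q * (A2 - B2)‖ := by rw [key2]
      _ ≤ ‖Q‖ * ‖A2 - B2‖ := Matrix.l2_opNorm_mul Q (A2 - B2)
      _ ≤ 1 * ‖A2 - B2‖ := by
          have : (0:ℝ) ≤ ‖A2 - B2‖ := norm_nonneg _
          nlinarith
      _ = ‖B2 - A2‖ := by rw [one_mul, norm_sub_rev]
  have hMnorm : ‖A2ᵀ * (A2 * A2ᵀ - B2 * B2ᵀ) * A2‖ = ‖N‖ * ‖N‖ := by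
    rw [key1, norm_transpose_mul_self]
  -- Part 2
  have part2 : specNorm (A2ᵀ * (A2 * A2ᵀ - B2 * B2ᵀ) * A2) ≤ 2 * (specNorm (B2 - A2)) ^ 2 := by
    rw [specNorm_eq_l2, specNorm_eq_l2, hMnorm]
    have h0 : (0:ℝ) ≤ ‖N‖ := norm_nonneg _
    have h1 : (0:ℝ) ≤ ‖B2 - A2‖ := norm_nonneg _
    nlinarith
  -- Part 1
  have part1 : (1 / (r : ℝ)) * Matrix.trace (A2ᵀ * (1 - B2 * B2ᵀ) * A2) ≤
      specNorm (A2ᵀ * (A2 * A2ᵀ - B2 * B2ᵀ) * A2) := by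
    rw [keyT, specNorm_eq_l2]
    have htr := trace_le_card_norm (A2ᵀ * (A2 * A2ᵀ - B2 * B2ᵀ) * A2)
    calc (1 / (r : ℝ)) * Matrix.trace (A2ᵀ * (A2 * A2ᵀ - B2 * B2ᵀ) * A2)
        ≤ (1 / (r : ℝ)) * ((r : ℝ) * ‖A2ᵀ * (A2 * A2ᵀ - B2 * B2ᵀ) * A2‖) := by
          apply mul_le_mul_of_nonneg_left htr
          positivity
      _ = ‖A2ᵀ * (A2 * A2ᵀ - B2 * B2ᵀ) * A2‖ := by field_simp
  -- trace identity for part 3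
  have htrace_id : 1 - (1 / (r : ℝ)) * Matrix.trace (B2 * B2ᵀ * A2 * A2ᵀ) =
      (1 / (r : ℝ)) * Matrix.trace (A2ᵀ * (1 - B2 * B2ᵀ) * A2) := by
    have h1 : A2ᵀ * (1 - B2 * B2ᵀ) * A2 = 1 - A2ᵀ * (B2 * B2ᵀ * A2) := by
      simp only [Matrix.mul_sub, Matrix.sub_mul, Matrix.mul_one, Matrix.one_mul,
        Matrix.mul_assoc, hA', hA]
    have h2 : Matrix.trace (A2ᵀ * (B2 * B2ᵀ * A2)) = Matrix.trace (B2 * B2ᵀ * A2 * A2ᵀ) := by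
      rw [Matrix.trace_mul_comm]
    have h3 : Matrix.trace (1 : Matrix (Fin r) (Fin r) ℝ) = (r : ℝ) := by
      simp [Matrix.trace_one]
    rw [h1, Matrix.trace_sub, h3, h2]
    field_simp
  -- Part 3
  have part3 : Real.sqrt (1 - (1 / (r : ℝ)) * Matrix.trace (B2 * B2ᵀ * A2 * A2ᵀ)) ≤
      Real.sqrt 2 * specNorm (B2 - A2) := by
    rw [htrace_id]
    have hle : (1 / (r : ℝ)) * Matrix.trace (A2ᵀ * (1 - B2 * B2ᵀ) * A2) ≤
        2 * (specNorm (B2 - A2)) ^ 2 := le_trans part1 part2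
    calc Real.sqrt ((1 / (r : ℝ)) * Matrix.trace (A2ᵀ * (1 - B2 * B2ᵀ) * A2))
        ≤ Real.sqrt (2 * (specNorm (B2 - A2)) ^ 2) := Real.sqrt_le_sqrt hle
      _ = Real.sqrt 2 * specNorm (B2 - A2) := by
          rw [Real.sqrt_mul (by norm_num : (0:ℝ) ≤ 2), Real.sqrt_sq (by
            rw [specNorm_eq_l2]; exact norm_nonneg _)]
  exact ⟨part1, part2, part3⟩
end

section
/- Let λ_1 ≥ λ_2 ≥ … ≥ λ_p > 0 be real numbers and ω > 0. Define IC(l) = Σ_{j=1}^{l} λ_{p+1−j} + (p−l)ω for l = 1,…,p, and let r̂ = max{j : 1 ≤ j ≤ p, λ_{p+1−j} ≤ ω} (assume this set is nonempty and that λ_{p+1−j} ≠ ω for all j). Then r̂ is the unique minimizer of IC over {1,…,p}. -/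
theorem stmt9 (p : ℕ) (hp : 1 ≤ p) (lam : ℕ → ℝ) (ω : ℝ) (hω : 0 < ω)
    (hpos : ∀ j, 1 ≤ j → j ≤ p → 0 < lam j)
    (hdec : ∀ i j, 1 ≤ i → i ≤ j → j ≤ p → lam j ≤ lam i)
    (hne : ∀ j, 1 ≤ j → j ≤ p → lam (p + 1 - j) ≠ ω)
    (rhat : ℕ) (hr1 : 1 ≤ rhat) (hrp : rhat ≤ p)
    (hrmem : lam (p + 1 - rhat) ≤ ω)
    (hrmax : ∀ j, 1 ≤ j → j ≤ p → lam (p + 1 - j) ≤ ω → j ≤ rhat) :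
    ∀ l, 1 ≤ l → l ≤ p → l ≠ rhat →
      (∑ j ∈ Finset.Icc 1 rhat, lam (p + 1 - j)) + ((p - rhat : ℕ) : ℝ) * ω <
      (∑ j ∈ Finset.Icc 1 l, lam (p + 1 - j)) + ((p - l : ℕ) : ℝ) * ω := by
  intro l hl1 hlp hlne
  have key_lt : ∀ j, 1 ≤ j → j ≤ rhat → lam (p + 1 - j) < ω := by
    intro j hj1 hjr
    have h1 : lam (p + 1 - j) ≤ lam (p + 1 - rhat) :=
      hdec (p + 1 - rhat) (p + 1 - j) (by omega) (by omega) (by omega)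
    exact lt_of_le_of_ne (le_trans h1 hrmem) (hne j hj1 (by omega))
  have key_gt : ∀ j, rhat < j → j ≤ p → ω < lam (p + 1 - j) := by
    intro j hjr hjp
    by_contra hcon
    push_neg at hcon
    exact absurd (hrmax j (by omega) hjp hcon) (by omega)
  have hIcc : ∀ n : ℕ, Finset.Icc 1 n = Finset.Ioc 0 n := by
    intro n; ext x; simp [Nat.lt_iff_add_one_le]
  rcases lt_or_gt_of_ne hlne with h | h
  · -- l < rhat
    have hsplit : (∑ j ∈ Finset.Ioc 0 l, lam (p+1-j)) +
        (∑ j ∈ Finset.Ioc l rhat, lam (p+1-j)) = ∑ j ∈ Finset.Ioc 0 rhat, lam (p+1-j) :=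
      Finset.sum_Ioc_consecutive _ (Nat.zero_le l) (le_of_lt h)
    have hb : ∑ j ∈ Finset.Ioc l rhat, lam (p+1-j) < ∑ _j ∈ Finset.Ioc l rhat, ω :=
      Finset.sum_lt_sum_of_nonempty (by rw [Finset.nonempty_Ioc]; exact h)
        (fun j hj => by
          rw [Finset.mem_Ioc] at hj
          exact key_lt j (by omega) hj.2)
    have hc : ∑ _j ∈ Finset.Ioc l rhat, (ω:ℝ) = ((rhat - l : ℕ):ℝ) * ω := by
      rw [Finset.sum_const, Nat.card_Ioc, nsmul_eq_mul]
    have hcast : ((p - l : ℕ):ℝ) = ((rhat - l : ℕ):ℝ) + ((p - rhat : ℕ):ℝ) := by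
      have : (p - l : ℕ) = (rhat - l) + (p - rhat) := by omega
      rw [this]; push_cast; ring
    rw [hIcc, hIcc]
    rw [← hsplit]
    rw [hcast]
    nlinarith [hb, hc]
  · -- rhat < l
    have hsplit : (∑ j ∈ Finset.Ioc 0 rhat, lam (p+1-j)) +
        (∑ j ∈ Finset.Ioc rhat l, lam (p+1-j)) = ∑ j ∈ Finset.Ioc 0 l, lam (p+1-j) :=
      Finset.sum_Ioc_consecutive _ (Nat.zero_le rhat) (le_of_lt h)
    have hb : ∑ _j ∈ Finset.Ioc rhat l, (ω:ℝ) < ∑ j ∈ Finset.Ioc rhat l, lam (p+1-j) :=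
      Finset.sum_lt_sum_of_nonempty (by rw [Finset.nonempty_Ioc]; exact h)
        (fun j hj => by
          rw [Finset.mem_Ioc] at hj
          exact key_gt j hj.1 (le_trans hj.2 hlp))
    have hc : ∑ _j ∈ Finset.Ioc rhat l, (ω:ℝ) = ((l - rhat : ℕ):ℝ) * ω := by
      rw [Finset.sum_const, Nat.card_Ioc, nsmul_eq_mul]
    have hcast : ((p - rhat : ℕ):ℝ) = ((l - rhat : ℕ):ℝ) + ((p - l : ℕ):ℝ) := by
      have : (p - rhat : ℕ) = (l - rhat) + (p - l) := by omega
      rw [this]; push_cast; ring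
    rw [hIcc, hIcc]
    rw [← hsplit]
    rw [hcast]
    nlinarith [hb, hc]
end
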